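/- For the open-chain spin Hamiltonian H_L = −Σ_{j=1}^{L−1}(S⁺_j S⁻_{j+1} + S⁻_j S⁺_{j+1}) − (1/2)Z_1 − Σ_{j=2}^{L−1} Z_j − (1/2)Z_L, both |0⟩ and the W state |W⟩ are eigenvectors with the same eigenvalue −(L−1). -/

import Mathlib

noncomputable section

abbrev QubitSpace (L : ℕ) := EuclideanSpace ℂ (Finset (Fin L))

/-- The all-zeros product state `|0…0⟩`. -/
def zeroState (L : ℕ) : QubitSpace L := WithLp.toLp 2 (fun S => if S = ∅ then 1 else 0)

/-- The W state. -/
def Wstate (L : ℕ) : QubitSpace L :=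
  WithLp.toLp 2 (fun S => if S.card = 1 then ((1 / Real.sqrt L : ℝ) : ℂ) else 0)

/-- Eigenvalue of `Z_j` on the basis state `S`: `-1` if `j ∈ S` (spin `|1⟩`), else `+1`. -/
def zSign {L : ℕ} (j : Fin L) (S : Finset (Fin L)) : ℂ := if j ∈ S then -1 else 1

/-- The open-chain Hamiltonian
`H_L = -Σ_{j=1}^{L-1} (S⁺_j S⁻_{j+1} + S⁻_j S⁺_{j+1}) - ½Z_1 - Σ_{j=2}^{L-1} Z_j - ½Z_L`.
The hopping term `S⁺_j S⁻_{j+1}` moves a 1 from site `j+1` to site `j`. -/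
def Hspin (L : ℕ) (ψ : QubitSpace L) : QubitSpace L :=
  WithLp.toLp 2 <| fun S =>
    -(∑ j ∈ Finset.range (L - 1),
        if h : j + 1 < L then
          (if (⟨j, Nat.lt_of_succ_lt h⟩ : Fin L) ∈ S ∧ (⟨j + 1, h⟩ : Fin L) ∉ S then
              ψ (insert (⟨j + 1, h⟩ : Fin L) (S.erase ⟨j, Nat.lt_of_succ_lt h⟩)) else 0)
          + (if (⟨j + 1, h⟩ : Fin L) ∈ S ∧ (⟨j, Nat.lt_of_succ_lt h⟩ : Fin L) ∉ S then
              ψ (insert (⟨j, Nat.lt_of_succ_lt h⟩ : Fin L) (S.erase ⟨j + 1, h⟩)) else 0)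
        else 0)
    - (∑ j : Fin L,
        (if (j : ℕ) = 0 ∨ (j : ℕ) = L - 1 then (1 / 2 : ℂ) else 1) * zSign j S) * ψ S

lemma coef_total (L : ℕ) (hL : 2 ≤ L) :
    ∑ j : Fin L, (if (j : ℕ) = 0 ∨ (j : ℕ) = L - 1 then (1 / 2 : ℂ) else 1) = (L : ℂ) - 1 := by
  have h0 : (0 : ℕ) < L := by omega
  have h1 : L - 1 < L := by omega
  have hfilter : Finset.univ.filter (fun j : Fin L => (j : ℕ) = 0 ∨ (j : ℕ) = L - 1)
      = {⟨0, h0⟩, ⟨L - 1, h1⟩} := by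
    ext j; simp [Fin.ext_iff]
  have hcard : (Finset.univ.filter (fun j : Fin L => (j : ℕ) = 0 ∨ (j : ℕ) = L - 1)).card = 2 := by
    rw [hfilter, Finset.card_pair]
    simp [Fin.ext_iff]; omega
  have hcard' : (Finset.univ.filter (fun j : Fin L => ¬((j : ℕ) = 0 ∨ (j : ℕ) = L - 1))).card = L - 2 := by
    have := Finset.card_filter_add_card_filter_not (s := (Finset.univ : Finset (Fin L)))
      (p := fun j : Fin L => (j : ℕ) = 0 ∨ (j : ℕ) = L - 1)
    simp only [Finset.card_univ, Fintype.card_fin] at this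
    omega
  rw [Finset.sum_ite, Finset.sum_const, Finset.sum_const, hcard, hcard']
  have : ((L - 2 : ℕ) : ℂ) = (L : ℂ) - 2 := by
    push_cast [Nat.cast_sub hL]; ring
  simp [this]
  ring

lemma zsum (L : ℕ) (hL : 2 ≤ L) (S : Finset (Fin L)) :
    ∑ j : Fin L, (if (j : ℕ) = 0 ∨ (j : ℕ) = L - 1 then (1 / 2 : ℂ) else 1) * zSign j S
      = ((L : ℂ) - 1) - 2 * ∑ j ∈ S, (if (j : ℕ) = 0 ∨ (j : ℕ) = L - 1 then (1 / 2 : ℂ) else 1) := by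
  have key : ∀ j : Fin L,
      (if (j : ℕ) = 0 ∨ (j : ℕ) = L - 1 then (1 / 2 : ℂ) else 1) * zSign j S
      = (if (j : ℕ) = 0 ∨ (j : ℕ) = L - 1 then (1 / 2 : ℂ) else 1)
        - 2 * (if j ∈ S then (if (j : ℕ) = 0 ∨ (j : ℕ) = L - 1 then (1 / 2 : ℂ) else 1) else 0) := by
    intro j
    unfold zSign
    split_ifs <;> ring
  rw [Finset.sum_congr rfl (fun j _ => key j), Finset.sum_sub_distrib, coef_total L hL,
    ← Finset.mul_sum, Finset.sum_ite_mem, Finset.univ_inter]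

lemma zero_part (L : ℕ) (hL : 2 ≤ L) :
    Hspin L (zeroState L) = (-((L : ℂ) - 1)) • zeroState L := by
  ext S
  have hhop : (∑ j ∈ Finset.range (L - 1),
        if h : j + 1 < L then
          (if (⟨j, Nat.lt_of_succ_lt h⟩ : Fin L) ∈ S ∧ (⟨j + 1, h⟩ : Fin L) ∉ S then
              zeroState L (insert (⟨j + 1, h⟩ : Fin L) (S.erase ⟨j, Nat.lt_of_succ_lt h⟩)) else 0)
          + (if (⟨j + 1, h⟩ : Fin L) ∈ S ∧ (⟨j, Nat.lt_of_succ_lt h⟩ : Fin L) ∉ S then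
              zeroState L (insert (⟨j, Nat.lt_of_succ_lt h⟩ : Fin L) (S.erase ⟨j + 1, h⟩)) else 0)
        else 0) = 0 := by
    apply Finset.sum_eq_zero
    intro j hj
    split
    · simp [zeroState, Finset.insert_ne_empty]
    · rfl
  show -(_) - _ * zeroState L S = _
  rw [hhop, zsum L hL S]
  simp only [PiLp.smul_apply, smul_eq_mul]
  by_cases hS : S = ∅
  · subst hS; simp [zeroState]
  · simp [zeroState, hS]

lemma W_part (L : ℕ) (hL : 2 ≤ L) :
    Hspin L (Wstate L) = (-((L : ℂ) - 1)) • Wstate L := by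
  set c : ℂ := ((1 / Real.sqrt L : ℝ) : ℂ) with hc
  ext S
  show -(_) - _ * Wstate L S = _
  rw [zsum L hL S]
  simp only [PiLp.smul_apply, smul_eq_mul]
  by_cases h1 : S.card = 1
  · obtain ⟨k, rfl⟩ := Finset.card_eq_one.mp h1
    have hkL : (k : ℕ) < L := k.isLt
    have hhop : (∑ j ∈ Finset.range (L - 1),
        if h : j + 1 < L then
          (if (⟨j, Nat.lt_of_succ_lt h⟩ : Fin L) ∈ ({k} : Finset (Fin L)) ∧ (⟨j + 1, h⟩ : Fin L) ∉ ({k} : Finset (Fin L)) then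
              Wstate L (insert (⟨j + 1, h⟩ : Fin L) (({k} : Finset (Fin L)).erase ⟨j, Nat.lt_of_succ_lt h⟩)) else 0)
          + (if (⟨j + 1, h⟩ : Fin L) ∈ ({k} : Finset (Fin L)) ∧ (⟨j, Nat.lt_of_succ_lt h⟩ : Fin L) ∉ ({k} : Finset (Fin L)) then
              Wstate L (insert (⟨j, Nat.lt_of_succ_lt h⟩ : Fin L) (({k} : Finset (Fin L)).erase ⟨j + 1, h⟩)) else 0)
        else 0)
        = (if (k : ℕ) = L - 1 then 0 else c) + (if (k : ℕ) = 0 then 0 else c) := by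
      have step : ∀ j ∈ Finset.range (L - 1),
          (if h : j + 1 < L then
          (if (⟨j, Nat.lt_of_succ_lt h⟩ : Fin L) ∈ ({k} : Finset (Fin L)) ∧ (⟨j + 1, h⟩ : Fin L) ∉ ({k} : Finset (Fin L)) then
              Wstate L (insert (⟨j + 1, h⟩ : Fin L) (({k} : Finset (Fin L)).erase ⟨j, Nat.lt_of_succ_lt h⟩)) else 0)
          + (if (⟨j + 1, h⟩ : Fin L) ∈ ({k} : Finset (Fin L)) ∧ (⟨j, Nat.lt_of_succ_lt h⟩ : Fin L) ∉ ({k} : Finset (Fin L)) then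
              Wstate L (insert (⟨j, Nat.lt_of_succ_lt h⟩ : Fin L) (({k} : Finset (Fin L)).erase ⟨j + 1, h⟩)) else 0)
        else 0)
          = (if j = (k : ℕ) then c else 0) + (if j + 1 = (k : ℕ) then c else 0) := by
        intro j hj
        have hjL : j + 1 < L := by
          have := Finset.mem_range.mp hj; omega
        rw [dif_pos hjL]
        congr 1
        · by_cases hjk : j = (k : ℕ)
          · have hk : (⟨j, Nat.lt_of_succ_lt hjL⟩ : Fin L) = k := Fin.ext hjk
            rw [if_pos, if_pos hjk]
            · rw [hk, Finset.erase_singleton]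
              simp [Wstate, hc]
            · refine ⟨by simp [hk], ?_⟩
              simp [Fin.ext_iff]; omega
          · rw [if_neg, if_neg hjk]
            simp [Fin.ext_iff]
            omega
        · by_cases hjk : j + 1 = (k : ℕ)
          · have hk : (⟨j + 1, hjL⟩ : Fin L) = k := Fin.ext hjk
            rw [if_pos, if_pos hjk]
            · rw [hk, Finset.erase_singleton]
              simp [Wstate, hc]
            · refine ⟨by simp [hk], ?_⟩
              simp [Fin.ext_iff]; omega
          · rw [if_neg, if_neg hjk]
            simp [Fin.ext_iff]
            omega
      rw [Finset.sum_congr rfl step, Finset.sum_add_distrib]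
      congr 1
      · rw [Finset.sum_ite_eq' (Finset.range (L - 1)) ((k : ℕ)) (fun _ => c)]
        simp only [Finset.mem_range]
        split_ifs with ha hb hb <;> first | rfl | omega
      · by_cases hk0 : (k : ℕ) = 0
        · rw [if_pos hk0]
          apply Finset.sum_eq_zero
          intro j _
          rw [if_neg (by omega)]
        · obtain ⟨m, hm⟩ : ∃ m, (k : ℕ) = m + 1 := ⟨(k : ℕ) - 1, by omega⟩
          rw [if_neg hk0]
          have step2 : ∀ j ∈ Finset.range (L - 1), (if j + 1 = (k : ℕ) then c else 0) = (if j = m then c else 0) := by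
            intro j _; rw [hm]; simp
          rw [Finset.sum_congr rfl step2, Finset.sum_ite_eq' (Finset.range (L - 1)) m (fun _ => c)]
          rw [if_pos (Finset.mem_range.mpr (by omega))]
    rw [hhop, Finset.sum_singleton]
    have hWk : Wstate L {k} = c := by simp [Wstate, hc]
    rw [hWk]
    by_cases hk0 : (k : ℕ) = 0
    · have hkL1 : (k : ℕ) ≠ L - 1 := by omega
      rw [if_neg hkL1, if_pos hk0, if_pos (Or.inl hk0)]
      ring
    · by_cases hkL1 : (k : ℕ) = L - 1
      · rw [if_pos hkL1, if_neg hk0, if_pos (Or.inr hkL1)]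
        ring
      · rw [if_neg hkL1, if_neg hk0, if_neg (by tauto)]
        ring
  · have cardins : ∀ (a b : Fin L), a ∈ S → b ∉ S → (insert b (S.erase a)).card = S.card := by
      intro a b ha hb
      have hpos : 0 < S.card := Finset.card_pos.mpr ⟨a, ha⟩
      rw [Finset.card_insert_of_notMem (fun h => hb (Finset.mem_of_mem_erase h)),
        Finset.card_erase_of_mem ha]
      omega
    have hhop : (∑ j ∈ Finset.range (L - 1),
        if h : j + 1 < L then
          (if (⟨j, Nat.lt_of_succ_lt h⟩ : Fin L) ∈ S ∧ (⟨j + 1, h⟩ : Fin L) ∉ S then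
              Wstate L (insert (⟨j + 1, h⟩ : Fin L) (S.erase ⟨j, Nat.lt_of_succ_lt h⟩)) else 0)
          + (if (⟨j + 1, h⟩ : Fin L) ∈ S ∧ (⟨j, Nat.lt_of_succ_lt h⟩ : Fin L) ∉ S then
              Wstate L (insert (⟨j, Nat.lt_of_succ_lt h⟩ : Fin L) (S.erase ⟨j + 1, h⟩)) else 0)
        else 0) = 0 := by
      apply Finset.sum_eq_zero
      intro j hj
      split
      · rename_i h
        have e1 : (if (⟨j, Nat.lt_of_succ_lt h⟩ : Fin L) ∈ S ∧ (⟨j + 1, h⟩ : Fin L) ∉ S then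
              Wstate L (insert (⟨j + 1, h⟩ : Fin L) (S.erase ⟨j, Nat.lt_of_succ_lt h⟩)) else 0) = 0 := by
          split_ifs with hcond
          · simp only [Wstate]
            rw [if_neg]
            rw [cardins _ _ hcond.1 hcond.2]; exact h1
          · rfl
        have e2 : (if (⟨j + 1, h⟩ : Fin L) ∈ S ∧ (⟨j, Nat.lt_of_succ_lt h⟩ : Fin L) ∉ S then
              Wstate L (insert (⟨j, Nat.lt_of_succ_lt h⟩ : Fin L) (S.erase ⟨j + 1, h⟩)) else 0) = 0 := by
          split_ifs with hcond
          · simp only [Wstate]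
            rw [if_neg]
            rw [cardins _ _ hcond.1 hcond.2]; exact h1
          · rfl
        rw [e1, e2, add_zero]
      · rfl
    rw [hhop]
    have : Wstate L S = 0 := by simp [Wstate, h1]
    rw [this]
    ring

/-- Both `|0⟩` and `|W⟩` are eigenvectors of `H_L` with the same eigenvalue `-(L-1)`. -/
theorem Hspin_degenerate (L : ℕ) (hL : 2 ≤ L) :
    Hspin L (zeroState L) = (-((L : ℂ) - 1)) • zeroState L ∧
      Hspin L (Wstate L) = (-((L : ℂ) - 1)) • Wstate L := by
  exact ⟨zero_part L hL, W_part L hL⟩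

end
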